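/- For s ∈ (0,1), let G(t) = ∫₀^t (t−τ)(1+τ²)^{−(2+s)/2} dτ. Then for all real p ≥ 0 and q ≥ 0: 2·(2G'(+∞)·p + G(p−q) − G(p+q)) = ∫_{−p}^{p} ( ∫_{−∞}^{−q} (1+(z−w)²)^{−(2+s)/2} dz + ∫_q^{+∞} (1+(z−w)²)^{−(2+s)/2} dz ) dw, where G'(+∞) = ∫₀^∞ (1+τ²)^{−(2+s)/2} dτ. -/

import Mathlib

open MeasureTheory Set Real intervalIntegral

noncomputable def ffAux (s τ : ℝ) : ℝ := (1 + τ ^ 2) ^ (-(2 + s) / 2)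

noncomputable def FFAux (s x : ℝ) : ℝ := ∫ τ in (0:ℝ)..x, ffAux s τ

lemma ffAux_cont (s : ℝ) : Continuous (ffAux s) := by
  apply Continuous.rpow_const (by continuity)
  intro x; left; positivity

lemma ffAux_int (s : ℝ) (hs : 0 < s) : Integrable (ffAux s) := by
  have h := integrable_rpow_neg_one_add_norm_sq (E := ℝ) (μ := volume) (r := 2 + s)
    (by simp; linarith)
  unfold ffAux
  simpa only [Real.norm_eq_abs, sq_abs] using h

lemma ffAux_even (s x : ℝ) : ffAux s (-x) = ffAux s x := by simp [ffAux]

lemma FFAux_hasDerivAt (s x : ℝ) : HasDerivAt (FFAux s) (ffAux s x) x :=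
  ((ffAux_cont s).integral_hasStrictDerivAt 0 x).hasDerivAt

lemma FFAux_cont (s : ℝ) : Continuous (FFAux s) :=
  continuous_iff_continuousAt.2 fun x => (FFAux_hasDerivAt s x).continuousAt

lemma FFAux_odd (s x : ℝ) : FFAux s (-x) = -FFAux s x := by
  have h := intervalIntegral.integral_comp_neg (a := (0:ℝ)) (b := x) (f := ffAux s)
  simp only [ffAux_even, neg_zero] at h
  rw [FFAux, intervalIntegral.integral_symm, ← h]; rfl

lemma IoiAux_eq (s : ℝ) (hs : 0 < s) (b : ℝ) :
    ∫ z in Ioi b, ffAux s z = (∫ z in Ioi (0:ℝ), ffAux s z) - FFAux s b := by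
  have hi := ffAux_int s hs
  have h1 := integral_Iic_add_Ioi (b := b) (μ := volume) hi.integrableOn hi.integrableOn
  have h0 := integral_Iic_add_Ioi (b := (0:ℝ)) (μ := volume) hi.integrableOn hi.integrableOn
  have h2 := integral_Iic_sub_Iic (a := (0:ℝ)) (b := b) (μ := volume) hi.integrableOn hi.integrableOn
  have h3 : FFAux s b = ∫ x in (0:ℝ)..b, ffAux s x := rfl
  linarith

lemma transAux (g : ℝ → ℝ) (a c : ℝ) :
    ∫ z in Ioi c, g (a + z) = ∫ z in Ioi (a + c), g z := by
  have e : MeasurableEmbedding (fun x : ℝ => a + x) :=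
    (Homeomorph.addLeft a).isClosedEmbedding.measurableEmbedding
  have hmap : Measure.map (fun x : ℝ => a + x) volume = volume :=
    map_add_left_eq_self volume a
  have h := e.setIntegral_map (μ := volume) g (Ioi (a + c))
  rw [hmap, preimage_const_add_Ioi] at h
  simpa using h.symm

lemma innerAux1 (s : ℝ) (q w : ℝ) :
    ∫ z in Iio (-q), ffAux s (z - w) = ∫ z in Ioi (w + q), ffAux s z := by
  rw [← integral_Iic_eq_integral_Iio]
  have h := integral_comp_neg_Iic (-q) (fun z => ffAux s (w + z))
  rw [neg_neg] at h
  have h2 : ∀ x : ℝ, ffAux s (w + -x) = ffAux s (x - w) := by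
    intro x
    rw [← ffAux_even]
    ring_nf
  simp only [h2] at h
  rw [h, transAux]

lemma innerAux2 (s : ℝ) (q w : ℝ) :
    ∫ z in Ioi q, ffAux s (z - w) = ∫ z in Ioi (-w + q), ffAux s z := by
  have h := transAux (ffAux s) (-w) q
  have h2 : ∀ z : ℝ, ffAux s (-w + z) = ffAux s (z - w) := fun z => by rw [neg_add_eq_sub]
  simp only [h2] at h
  exact h

lemma FF_symm_zero (s a : ℝ) : ∫ x in (-a)..a, FFAux s x = 0 := by
  have hii : ∀ a b : ℝ, IntervalIntegrable (FFAux s) volume a b :=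
    fun a b => (FFAux_cont s).intervalIntegrable a b
  have hsplit := intervalIntegral.integral_add_adjacent_intervals (hii (-a) 0) (hii 0 a)
  have h := intervalIntegral.integral_comp_neg (a := (0:ℝ)) (b := a) (f := FFAux s)
  rw [neg_zero] at h
  have h2 : ∫ x in (0:ℝ)..a, FFAux s (-x) = -∫ x in (0:ℝ)..a, FFAux s x := by
    simp only [FFAux_odd]
    exact intervalIntegral.integral_neg
  linarith

lemma G_eqAux (s : ℝ) (t : ℝ) :
    (∫ τ in (0:ℝ)..t, (t - τ) * ffAux s τ) = ∫ u in (0:ℝ)..t, FFAux s u := by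
  have hfc := ffAux_cont s
  have hii : ∀ a b : ℝ, IntervalIntegrable (ffAux s) volume a b :=
    fun a b => hfc.intervalIntegrable a b
  have hii2 : ∀ a b : ℝ, IntervalIntegrable (fun τ => τ * ffAux s τ) volume a b :=
    fun a b => (continuous_id.mul hfc).intervalIntegrable a b
  have expand : (∫ τ in (0:ℝ)..t, (t - τ) * ffAux s τ)
      = t * FFAux s t - ∫ τ in (0:ℝ)..t, τ * ffAux s τ := by
    rw [FFAux, ← intervalIntegral.integral_const_mul,
      ← intervalIntegral.integral_sub ((hii 0 t).const_mul t) (hii2 0 t)]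
    congr 1; ext τ; ring
  rw [expand]
  have key : ∀ t : ℝ, t * FFAux s t - (∫ τ in (0:ℝ)..t, τ * ffAux s τ)
      - (∫ u in (0:ℝ)..t, FFAux s u) = 0 := by
    intro t
    set H : ℝ → ℝ := fun t => t * FFAux s t - (∫ τ in (0:ℝ)..t, τ * ffAux s τ)
      - (∫ u in (0:ℝ)..t, FFAux s u) with hH
    show H t = 0
    have hd : ∀ x, HasDerivAt H 0 x := by
      intro x
      have h1 : HasDerivAt (fun t : ℝ => t * FFAux s t) (1 * FFAux s x + x * ffAux s x) x :=
        (hasDerivAt_id x).mul (FFAux_hasDerivAt s x)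
      have h2 : HasDerivAt (fun t => ∫ τ in (0:ℝ)..t, τ * ffAux s τ) (x * ffAux s x) x :=
        ((continuous_id.mul hfc).integral_hasStrictDerivAt 0 x).hasDerivAt
      have h3 : HasDerivAt (fun t => ∫ u in (0:ℝ)..t, FFAux s u) (FFAux s x) x :=
        ((FFAux_cont s).integral_hasStrictDerivAt 0 x).hasDerivAt
      have h := (h1.sub h2).sub h3
      exact h.congr_deriv (by ring)
    have hc := is_const_of_deriv_eq_zero (f := H)
      (fun x => (hd x).differentiableAt) (fun x => (hd x).deriv) t 0
    have h0 : H 0 = 0 := by simp [hH]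
    rw [hc, h0]
  linarith [key t]

theorem stmt_18 (s : ℝ) (hs : 0 < s) (hs1 : s < 1)
    (G : ℝ → ℝ) (A : ℝ)
    (hG : ∀ t, G t = ∫ τ in (0 : ℝ)..t, (t - τ) * (1 + τ ^ 2) ^ (-(2 + s) / 2))
    (hA : A = ∫ τ in Set.Ioi (0 : ℝ), (1 + τ ^ 2) ^ (-(2 + s) / 2)) :
    ∀ p q : ℝ, 0 ≤ p → 0 ≤ q →
      2 * (2 * A * p + G (p - q) - G (p + q)) =
        ∫ w in Set.Ioo (-p) p,
          ((∫ z in Set.Iio (-q), (1 + (z - w) ^ 2) ^ (-(2 + s) / 2)) +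
           ∫ z in Set.Ioi q, (1 + (z - w) ^ 2) ^ (-(2 + s) / 2)) := by
  intro p q hp hq
  have hiiF : ∀ a b : ℝ, IntervalIntegrable (FFAux s) volume a b :=
    fun a b => (FFAux_cont s).intervalIntegrable a b
  have hA' : A = ∫ z in Ioi (0:ℝ), ffAux s z := by rw [hA]; rfl
  have hGt : ∀ t, G t = ∫ u in (0:ℝ)..t, FFAux s u := by
    intro t
    rw [hG t]
    exact G_eqAux s t
  have hinner : ∀ w : ℝ,
      ((∫ z in Set.Iio (-q), (1 + (z - w) ^ 2) ^ (-(2 + s) / 2)) +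
       ∫ z in Set.Ioi q, (1 + (z - w) ^ 2) ^ (-(2 + s) / 2))
      = (2 * A - FFAux s (q + w)) - FFAux s (q - w) := by
    intro w
    have h1 : (∫ z in Set.Iio (-q), (1 + (z - w) ^ 2) ^ (-(2 + s) / 2))
        = A - FFAux s (q + w) := by
      have h := innerAux1 s q w
      rw [IoiAux_eq s hs, add_comm w q, ← hA'] at h
      exact h
    have h2 : (∫ z in Set.Ioi q, (1 + (z - w) ^ 2) ^ (-(2 + s) / 2))
        = A - FFAux s (q - w) := by
      have h := innerAux2 s q w
      rw [IoiAux_eq s hs, neg_add_eq_sub, ← hA'] at h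
      exact h
    rw [h1, h2]; ring
  simp only [hinner, hGt]
  have hIoo : (∫ w in Set.Ioo (-p) p, ((2 * A - FFAux s (q + w)) - FFAux s (q - w)))
      = ∫ w in (-p)..p, ((2 * A - FFAux s (q + w)) - FFAux s (q - w)) := by
    rw [intervalIntegral.integral_of_le (by linarith), integral_Ioc_eq_integral_Ioo]
  rw [hIoo]
  have hi1 : IntervalIntegrable (fun w => FFAux s (q + w)) volume (-p) p :=
    ((FFAux_cont s).comp (continuous_const.add continuous_id)).intervalIntegrable _ _
  have hi2 : IntervalIntegrable (fun w => FFAux s (q - w)) volume (-p) p :=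
    ((FFAux_cont s).comp (continuous_const.sub continuous_id)).intervalIntegrable _ _
  rw [intervalIntegral.integral_sub (intervalIntegrable_const.sub hi1) hi2,
    intervalIntegral.integral_sub intervalIntegrable_const hi1,
    intervalIntegral.integral_const,
    intervalIntegral.integral_comp_add_left (a := -p) (b := p) (f := FFAux s) q,
    intervalIntegral.integral_comp_sub_left (a := -p) (b := p) (f := FFAux s) q,
    ← sub_eq_add_neg, sub_neg_eq_add, smul_eq_mul]
  have hsplit1 : (∫ u in (0:ℝ)..(p+q), FFAux s u) - ∫ u in (0:ℝ)..(p-q), FFAux s u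
      = ∫ u in (p-q)..(p+q), FFAux s u :=
    intervalIntegral.integral_interval_sub_left (hiiF 0 (p+q)) (hiiF 0 (p-q))
  have hswap : (∫ u in (q-p)..(q+p), FFAux s u) = ∫ u in (p-q)..(p+q), FFAux s u := by
    rw [show q + p = p + q from add_comm q p]
    have hz : ∫ u in (q-p)..(p-q), FFAux s u = 0 := by
      have h := FF_symm_zero s (p - q)
      rw [show -(p - q) = q - p by ring] at h
      exact h
    have hadd := intervalIntegral.integral_add_adjacent_intervals
      (hiiF (q-p) (p-q)) (hiiF (p-q) (p+q))
    linarith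
  rw [show q - -p = q + p by ring]
  linear_combination (-2 : ℝ) * hsplit1 + 2 * hswap
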